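/- The operators Ψ_j, 1 ≤ j ≤ n-1, defined on functions of n variables by (Ψ_j f)(t_1,...,t_n) = Q(t_j, t_{j+1}) f(t_1,...,t_{j+1}, t_j,...,t_n), satisfy Ψ_j² = id, Ψ_i Ψ_j = Ψ_j Ψ_i for |i-j| ≥ 2, and the braid relation Ψ_j Ψ_{j+1} Ψ_j = Ψ_{j+1} Ψ_j Ψ_{j+1}. -/

import Mathlib

/-- The operator `Ψ_j`: `(Ψ_j f)(t_1,…,t_n) = Q(t_j,t_{j+1}) f(…,t_{j+1},t_j,…)`
(indices `0`-based: positions `j` and `j+1`). -/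
def PsiJ {T : Type*} (Q : T → T → ℂ) {n : ℕ} (j : ℕ) (hj : j + 1 < n)
    (f : (Fin n → T) → ℂ) : (Fin n → T) → ℂ :=
  fun t => Q (t ⟨j, Nat.lt_of_succ_lt hj⟩) (t ⟨j + 1, hj⟩) *
    f (t ∘ Equiv.swap (⟨j, Nat.lt_of_succ_lt hj⟩ : Fin n) ⟨j + 1, hj⟩)

/-- the operators `Ψ_j` satisfy `Ψ_j² = id`, commute at distance ≥ 2,
and satisfy the braid relation. -/
theorem PsiJ_relations {T : Type*} (n : ℕ) (Q : T → T → ℂ)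
    (hherm : ∀ s t, (starRingEnd ℂ) (Q t s) = Q s t)
    (habs : ∀ s t, ‖Q s t‖ = 1) :
    (∀ (j : ℕ) (hj : j + 1 < n) (f : (Fin n → T) → ℂ),
        PsiJ Q j hj (PsiJ Q j hj f) = f) ∧
    (∀ (i j : ℕ) (hi : i + 1 < n) (hj : j + 1 < n), (i + 2 ≤ j ∨ j + 2 ≤ i) →
        ∀ f : (Fin n → T) → ℂ,
          PsiJ Q i hi (PsiJ Q j hj f) = PsiJ Q j hj (PsiJ Q i hi f)) ∧
    (∀ (j : ℕ) (hj2 : j + 2 < n) (f : (Fin n → T) → ℂ),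
        PsiJ Q j (Nat.lt_of_succ_lt hj2) (PsiJ Q (j + 1) hj2
            (PsiJ Q j (Nat.lt_of_succ_lt hj2) f))
          = PsiJ Q (j + 1) hj2 (PsiJ Q j (Nat.lt_of_succ_lt hj2)
              (PsiJ Q (j + 1) hj2 f))) := by
  have hQ1 : ∀ s t, Q s t * Q t s = 1 := by
    intro s t
    rw [← hherm s t, mul_comm, Complex.mul_conj', habs]
    norm_num
  refine ⟨?_, ?_, ?_⟩
  · intro j hj f
    funext t
    set a : Fin n := ⟨j, Nat.lt_of_succ_lt hj⟩
    set b : Fin n := ⟨j + 1, hj⟩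
    have hcomp : (t ∘ ⇑(Equiv.swap a b)) ∘ ⇑(Equiv.swap a b) = t := by
      funext x; simp [Function.comp, Equiv.swap_apply_self]
    simp only [PsiJ, Function.comp_apply, Equiv.swap_apply_left, Equiv.swap_apply_right, hcomp, a, b]
    rw [← mul_assoc, hQ1, one_mul]
  · intro i j hi hj hij f
    funext t
    set a : Fin n := ⟨i, Nat.lt_of_succ_lt hi⟩
    set b : Fin n := ⟨i + 1, hi⟩
    set c : Fin n := ⟨j, Nat.lt_of_succ_lt hj⟩
    set d : Fin n := ⟨j + 1, hj⟩
    have hac : a ≠ c := by simp [a, c, Fin.ext_iff]; omega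
    have had : a ≠ d := by simp [a, d, Fin.ext_iff]; omega
    have hbc : b ≠ c := by simp [b, c, Fin.ext_iff]; omega
    have hbd : b ≠ d := by simp [b, d, Fin.ext_iff]; omega
    have hcomm : (t ∘ ⇑(Equiv.swap a b)) ∘ ⇑(Equiv.swap c d)
        = (t ∘ ⇑(Equiv.swap c d)) ∘ ⇑(Equiv.swap a b) := by
      funext x
      simp only [Function.comp_apply, Equiv.swap_apply_def]
      split_ifs <;> simp_all
    simp only [PsiJ, Function.comp_apply,
      Equiv.swap_apply_of_ne_of_ne hac.symm hbc.symm,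
      Equiv.swap_apply_of_ne_of_ne had.symm hbd.symm,
      Equiv.swap_apply_of_ne_of_ne hac had,
      Equiv.swap_apply_of_ne_of_ne hbc hbd, hcomm, a, b, c, d]
    ring
  · intro j hj2 f
    funext t
    set a : Fin n := ⟨j, Nat.lt_of_succ_lt (Nat.lt_of_succ_lt hj2)⟩
    set b : Fin n := ⟨j + 1, Nat.lt_of_succ_lt hj2⟩
    set c : Fin n := ⟨j + 1 + 1, hj2⟩
    have hab : a ≠ b := by simp only [ne_eq, a, b, Fin.mk.injEq]; omega
    have hac : a ≠ c := by simp only [ne_eq, a, c, Fin.mk.injEq]; omega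
    have hbc : b ≠ c := by simp only [ne_eq, b, c, Fin.mk.injEq]; omega
    have hbraid : Equiv.swap a b * Equiv.swap b c * Equiv.swap a b
        = Equiv.swap b c * Equiv.swap a b * Equiv.swap b c := by
      rw [Equiv.swap_mul_swap_mul_swap hab hac, Equiv.swap_comm a b, Equiv.swap_comm b c,
        Equiv.swap_mul_swap_mul_swap hbc.symm hac.symm, Equiv.swap_comm]
    have hcompL : ((t ∘ ⇑(Equiv.swap a b)) ∘ ⇑(Equiv.swap b c)) ∘ ⇑(Equiv.swap a b)
        = ((t ∘ ⇑(Equiv.swap b c)) ∘ ⇑(Equiv.swap a b)) ∘ ⇑(Equiv.swap b c) := by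
      have := congrArg (fun σ : Equiv.Perm (Fin n) => t ∘ ⇑σ) hbraid
      simpa [Equiv.Perm.coe_mul, Function.comp_assoc] using this
    simp only [PsiJ, Function.comp_apply, Equiv.swap_apply_left, Equiv.swap_apply_right,
      Equiv.swap_apply_of_ne_of_ne hab hac,
      Equiv.swap_apply_of_ne_of_ne hac.symm hbc.symm, hcompL, a, b, c]
    ring
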